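/- Let f > 1 be an odd integer, let e = ⌊log₂ f⌋ (so 2^e < f < 2^{e+1}), let m be the multiplicative order of 2 modulo f, and write 2^m − 1 = f·q. Then for every integer j ≥ 1, ⌊2^{jm+e}/f⌋ = q·2^e·(2^{jm} − 1)/(2^m − 1), and 2^{m−1} ≤ q·2^e < 2^m; consequently ⌊2^{jm+e}/f⌋ is a binary j'th power (its binary representation consists of j repetitions of a block of length m). -/

import Mathlib

/-- `ck j n = 1 + 2^n + 2^(2n) + ⋯ + 2^((j-1)n)`. -/
def ck (j n : ℕ) : ℕ := ∑ i ∈ Finset.range j, 2 ^ (i * n)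

/-- `m` is a binary `j`'th power: `m = a * ck j n` for some `n ≥ 1` and `2^(n-1) ≤ a < 2^n`. -/
def IsBinaryKthPower (j m : ℕ) : Prop :=
  ∃ n a : ℕ, 1 ≤ n ∧ 2 ^ (n - 1) ≤ a ∧ a < 2 ^ n ∧ m = a * ck j n

lemma ck_geom (m : ℕ) : ∀ j : ℕ, (2 ^ m - 1) * ck j m + 1 = 2 ^ (j * m) := by
  intro j
  induction j with
  | zero => simp [ck]
  | succ k ih =>
    have h1 : 1 ≤ 2 ^ m := Nat.one_le_two_pow
    have h2 : ck (k + 1) m = ck k m + 2 ^ (k * m) := by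
      simp [ck, Finset.sum_range_succ]
    have h3 : 2 ^ ((k + 1) * m) = 2 ^ m * 2 ^ (k * m) := by
      rw [← pow_add]; ring_nf
    have h4 : (2 ^ m - 1) * 2 ^ (k * m) = 2 ^ m * 2 ^ (k * m) - 2 ^ (k * m) := by
      rw [Nat.sub_mul, one_mul]
    have h5 : 2 ^ (k * m) ≤ 2 ^ m * 2 ^ (k * m) :=
      Nat.le_mul_of_pos_left _ (Nat.pos_of_ne_zero (by positivity))
    rw [h2, h3, Nat.mul_add, h4]
    omega

/-- Let `f > 1` be odd, `e = ⌊log₂ f⌋`, `m` the multiplicative order of `2` mod `f`, and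
`2^m - 1 = f·q`. Then for `j ≥ 1`, `⌊2^(jm+e)/f⌋ = q·2^e·(2^(jm) - 1)/(2^m - 1)` with
`2^(m-1) ≤ q·2^e < 2^m`; consequently `⌊2^(jm+e)/f⌋` is a binary `j`'th power. -/
theorem floor_pow_div_isBinaryKthPower (f : ℕ) (hf : 1 < f) (hodd : Odd f)
    (e m q : ℕ) (he : e = Nat.log 2 f) (hm : m = orderOf (2 : ZMod f))
    (hq : 2 ^ m - 1 = f * q) (j : ℕ) (hj : 1 ≤ j) :
    2 ^ (j * m + e) / f = q * 2 ^ e * ((2 ^ (j * m) - 1) / (2 ^ m - 1)) ∧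
      2 ^ (m - 1) ≤ q * 2 ^ e ∧ q * 2 ^ e < 2 ^ m ∧
      IsBinaryKthPower j (2 ^ (j * m + e) / f) := by
  have hf0 : f ≠ 0 := by omega
  haveI : NeZero f := ⟨hf0⟩
  -- m ≥ 1
  have hcop : Nat.Coprime 2 f := Nat.coprime_two_left.mpr hodd
  have hu : IsUnit ((2 : ℕ) : ZMod f) := (ZMod.isUnit_iff_coprime 2 f).mpr hcop
  have hm1 : 1 ≤ m := by
    rcases hu with ⟨u, hu'⟩
    rw [show ((2 : ℕ) : ZMod f) = (2 : ZMod f) by push_cast; ring] at hu'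
    rw [hm, ← hu', orderOf_units]
    exact orderOf_pos u
  -- 2^m ≥ 2, so q ≥ 1
  have h2m : 2 ≤ 2 ^ m := by
    calc 2 = 2 ^ 1 := rfl
    _ ≤ 2 ^ m := Nat.pow_le_pow_right (by norm_num) hm1
  have hq1 : 1 ≤ q := by
    rcases Nat.eq_zero_or_pos q with h | h
    · simp [h] at hq; omega
    · exact h
  -- e bounds
  have he1 : 1 ≤ e := by
    rw [he]
    exact (Nat.le_log_iff_pow_le (by norm_num) hf0).mpr (by simpa using (show 2 ≤ f by omega))
  have hef1 : 2 ^ e ≤ f := he ▸ Nat.pow_log_le_self 2 hf0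
  have hef : 2 ^ e < f := by
    rcases Nat.lt_or_ge (2 ^ e) f with h | h
    · exact h
    · exfalso
      have : 2 ^ e = f := le_antisymm hef1 h
      rcases hodd with ⟨k, hk⟩
      have : 2 ∣ 2 ^ e := dvd_pow_self 2 (by omega)
      omega
  have hfe : f < 2 ^ (e + 1) := he ▸ Nat.lt_pow_succ_log_self (by norm_num) f
  -- bounds on q * 2^e
  have hub : q * 2 ^ e < 2 ^ m := by
    calc q * 2 ^ e ≤ q * f := Nat.mul_le_mul_left q (le_of_lt hef)
    _ = 2 ^ m - 1 := by rw [Nat.mul_comm]; omega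
    _ < 2 ^ m := by omega
  have hlb : 2 ^ (m - 1) ≤ q * 2 ^ e := by
    have h1 : 2 ^ m ≤ q * 2 ^ (e + 1) := by
      calc 2 ^ m ≤ f * q + q := by omega
      _ = q * (f + 1) := by ring
      _ ≤ q * 2 ^ (e + 1) := Nat.mul_le_mul_left q (by omega)
    have h2 : 2 ^ m = 2 ^ (m - 1) * 2 := by
      rw [← pow_succ]; congr 1; omega
    have h3 : q * 2 ^ (e + 1) = q * 2 ^ e * 2 := by ring
    omega
  -- main equality
  have hgeom := ck_geom m j
  have hdiv : (2 ^ (j * m) - 1) / (2 ^ m - 1) = ck j m := by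
    have : 2 ^ (j * m) - 1 = (2 ^ m - 1) * ck j m := by omega
    rw [this, Nat.mul_div_cancel_left _ (by omega)]
  have hmain : 2 ^ (j * m + e) / f = q * 2 ^ e * ck j m := by
    have h1 : 2 ^ (j * m + e) = f * (q * 2 ^ e * ck j m) + 2 ^ e := by
      rw [pow_add]
      calc 2 ^ (j * m) * 2 ^ e = ((2 ^ m - 1) * ck j m + 1) * 2 ^ e := by rw [hgeom]
      _ = (f * q * ck j m + 1) * 2 ^ e := by rw [← hq]
      _ = f * (q * 2 ^ e * ck j m) + 2 ^ e := by ring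
    rw [h1, Nat.mul_add_div (by omega), Nat.div_eq_of_lt hef]
    omega
  refine ⟨by rw [hmain, hdiv], hlb, hub, m, q * 2 ^ e, hm1, hlb, hub, hmain⟩
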